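/- arXiv:2003.02313 — 3 statements merged into one kernel-verified Lean document; each statement's English description precedes it below -/
import Mathlib

section
/- For nonnegative integers h ≥ 1, n', and positive integers s_1,...,s_h with n' ≥ s_1+...+s_h, the number of vectors (r_1,...,r_h) of distinct integers with 1 ≤ r_j ≤ n' for all j, satisfying r_j ≥ Σ_{i: r_i < r_j} s_i + s_j for every j (equivalently, each r_j is at least the total stock of products stocked out at or before index r_j), equals (n'+1)!/(n'+1-h)! − (n')!/(n'+1-h)! · (s_1+...+s_h). -/
open Finset

/-- The finset of feasible stock-out vectors. -/
noncomputable def stockSet (h n : ℕ) (s : Fin h → ℕ) : Finset (Fin h → ℕ) :=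
  (Fintype.piFinset fun _ => Finset.Icc 1 n).filter fun r =>
    Function.Injective r ∧ ∀ j, (∑ i ∈ Finset.univ.filter (fun i => r i ≤ r j), s i) ≤ r j

lemma mem_stockSet {h n : ℕ} {s : Fin h → ℕ} {r : Fin h → ℕ} :
    r ∈ stockSet h n s ↔ (∀ j, 1 ≤ r j ∧ r j ≤ n) ∧ Function.Injective r ∧
      ∀ j, (∑ i ∈ Finset.univ.filter (fun i => r i ≤ r j), s i) ≤ r j := by
  simp [stockSet, Fintype.mem_piFinset, Finset.mem_Icc, and_assoc]

noncomputable def amax {h : ℕ} (r : Fin (h+1) → ℕ) : Fin (h+1) :=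
  (Finite.exists_max r).choose

lemma amax_spec {h : ℕ} (r : Fin (h+1) → ℕ) (i : Fin (h+1)) : r i ≤ r (amax r) :=
  (Finite.exists_max r).choose_spec i

lemma amax_eq {h : ℕ} {r : Fin (h+1) → ℕ} (hr : Function.Injective r) {j : Fin (h+1)}
    (hj : ∀ i, r i ≤ r j) : amax r = j :=
  hr (le_antisymm (amax_spec r j) (hj _)).symm

lemma sum_filter_succAbove {k : ℕ} (s r : Fin (k+2) → ℕ) (j : Fin (k+2)) (t : ℕ) :
    (∑ i ∈ Finset.univ.filter (fun i => r i ≤ t), s i)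
      = (if r j ≤ t then s j else 0)
        + ∑ i ∈ Finset.univ.filter (fun i => r (j.succAbove i) ≤ t), s (j.succAbove i) := by
  rw [Finset.sum_filter, Finset.sum_filter]
  exact Fin.sum_univ_succAbove (fun i => if r i ≤ t then s i else 0) j

lemma fiber_card {k n : ℕ} (s : Fin (k+2) → ℕ) (hs : ∀ i, 1 ≤ s i) (j : Fin (k+2))
    (m : ℕ) (hm : m ∈ Finset.Icc (∑ i, s i) n) :
    ((stockSet (k+2) n s).filter fun r => (amax r, r (amax r)) = (j, m)).card
      = (stockSet (k+1) (m-1) (fun i => s (j.succAbove i))).card := by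
  rw [Finset.mem_Icc] at hm
  have hm1 : 1 ≤ m := le_trans (le_trans (hs ⟨0, by omega⟩) (Finset.single_le_sum
    (f := s) (fun i _ => Nat.zero_le _) (Finset.mem_univ _))) hm.1
  refine Finset.card_nbij' (fun r => r ∘ j.succAbove) (fun q => j.insertNth m q) ?_ ?_ ?_ ?_
  · -- forward membership
    intro r hr
    simp only [Finset.mem_coe] at hr ⊢
    rw [Finset.mem_filter, Prod.mk.injEq] at hr
    obtain ⟨hrP, hja, hjm⟩ := hr
    rw [mem_stockSet] at hrP
    obtain ⟨hb, hinj, hcond⟩ := hrP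
    have hmax : ∀ i, r i ≤ r j := by rw [← hja]; exact amax_spec r
    have hrj : r j = m := by rw [← hja]; exact hjm
    rw [mem_stockSet]
    refine ⟨?_, hinj.comp (Fin.succAbove_right_injective), ?_⟩
    · intro i
      simp only [Function.comp_apply]
      have h1 := (hb (j.succAbove i)).1
      have h2 : r (j.succAbove i) < m := by
        rcases lt_or_eq_of_le (hmax (j.succAbove i)) with h | h
        · omega
        · exact absurd (hinj h) (Fin.succAbove_ne j i)
      exact ⟨h1, by omega⟩
    · intro t
      simp only [Function.comp_apply]
      have hct := hcond (j.succAbove t)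
      rw [sum_filter_succAbove s r j (r (j.succAbove t))] at hct
      split_ifs at hct <;> omega
  · -- backward membership
    intro q hq
    simp only [Finset.mem_coe] at hq ⊢
    rw [mem_stockSet] at hq
    obtain ⟨hb, hinj, hcond⟩ := hq
    have hval : ∀ i, (j.insertNth m q : Fin (k+2) → ℕ) (j.succAbove i) = q i := fun i => by simp
    have hvj : (j.insertNth m q : Fin (k+2) → ℕ) j = m := by simp
    have hlt : ∀ i, q i < m := fun i => by have := (hb i).2; omega
    have key : ∀ a, a ≠ j → (j.insertNth m q : Fin (k+2) → ℕ) a < m := by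
      intro a ha
      obtain ⟨i, rfl⟩ := Fin.exists_succAbove_eq ha
      rw [hval]; exact hlt i
    have hinj' : Function.Injective (j.insertNth m q : Fin (k+2) → ℕ) := by
      intro a b hab
      by_cases ha : a = j <;> by_cases hb' : b = j
      · rw [ha, hb']
      · exfalso; have h2 := key b hb'; rw [ha, hvj] at hab; omega
      · exfalso; have h2 := key a ha; rw [hb', hvj] at hab; omega
      · obtain ⟨i, rfl⟩ := Fin.exists_succAbove_eq ha
        obtain ⟨i', rfl⟩ := Fin.exists_succAbove_eq hb'
        rw [hval, hval] at hab
        rw [hinj hab]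
    have hmax : ∀ i, (j.insertNth m q : Fin (k+2) → ℕ) i
        ≤ (j.insertNth m q : Fin (k+2) → ℕ) j := by
      intro i
      by_cases hi : i = j
      · rw [hi]
      · rw [hvj]; exact le_of_lt (key i hi)
    show (j.insertNth m q : Fin (k+2) → ℕ) ∈ _
    rw [Finset.mem_filter, mem_stockSet]
    refine ⟨⟨?_, hinj', ?_⟩, ?_⟩
    · intro i
      by_cases hi : i = j
      · rw [hi, hvj]; exact ⟨hm1, hm.2⟩
      · obtain ⟨t, rfl⟩ := Fin.exists_succAbove_eq hi
        rw [hval]; exact ⟨(hb t).1, by have := (hb t).2; omega⟩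
    · intro t
      by_cases ht : t = j
      · rw [ht, hvj]
        calc (∑ i ∈ Finset.univ.filter
              (fun i => (j.insertNth m q : Fin (k+2) → ℕ) i ≤ m), s i)
            ≤ ∑ i, s i := Finset.sum_le_sum_of_subset (Finset.filter_subset _ _)
          _ ≤ m := hm.1
      · obtain ⟨u, rfl⟩ := Fin.exists_succAbove_eq ht
        rw [sum_filter_succAbove s (j.insertNth m q) j
          ((j.insertNth m q : Fin (k+2) → ℕ) (j.succAbove u))]
        simp only [hval, hvj]
        rw [if_neg (not_le_of_gt (hlt u)), zero_add]
        simpa using hcond u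
    · have hja : amax (j.insertNth m q) = j := amax_eq hinj' hmax
      rw [Prod.mk.injEq, hja, hvj]
      exact ⟨rfl, rfl⟩
  · -- left inverse
    intro r hr
    simp only [Finset.mem_coe] at hr
    rw [Finset.mem_filter, Prod.mk.injEq] at hr
    have hrj : r j = m := by rw [← hr.2.1]; exact hr.2.2
    rw [← hrj]
    exact Fin.insertNth_self_removeNth j r
  · -- right inverse
    intro q hq
    funext i
    simp

lemma stock_alg (k S : ℕ) (hS : 1 ≤ S) (n : ℕ) :
    ∑ m ∈ Finset.Icc S n, ((k+2) * (m - S) + S) * (m-1).descFactorial k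
      = (n + 1 - S) * n.descFactorial (k+1) := by
  induction n with
  | zero =>
    rw [Finset.Icc_eq_empty (by omega), Finset.sum_empty,
      show 0 + 1 - S = 0 by omega, Nat.zero_mul]
  | succ n ih =>
    rcases le_or_gt S (n+1) with hSn | hSn
    · rw [Finset.sum_Icc_succ_top hSn, ih, Nat.add_sub_cancel]
      have hD : (n+1).descFactorial (k+1) = (n+1) * n.descFactorial k :=
        Nat.succ_descFactorial_succ n k
      rcases le_or_gt k n with hkn | hkn
      · have hD2 : n.descFactorial (k+1) = (n - k) * n.descFactorial k :=
          Nat.descFactorial_succ n k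
        rw [hD, hD2]
        zify [hS, hSn, hkn, show S ≤ n + 2 by omega,
          show S ≤ n + 1 by omega]
        ring
      · have h1 : n.descFactorial (k+1) = 0 := Nat.descFactorial_eq_zero_iff_lt.2 (by omega)
        have h2 : n.descFactorial k = 0 := Nat.descFactorial_eq_zero_iff_lt.2 hkn
        have h3 : (n+1).descFactorial (k+1) = 0 := by
          rw [hD, h2, Nat.mul_zero]
        rw [h1, h2, h3]
        ring
    · rw [Finset.Icc_eq_empty (by omega), Finset.sum_empty,
        show n + 1 + 1 - S = 0 by omega, Nat.zero_mul]

lemma stockSet_card (k : ℕ) : ∀ (n : ℕ) (s : Fin (k+1) → ℕ), (∀ i, 1 ≤ s i) →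
    (∑ i, s i) ≤ n →
    (stockSet (k+1) n s).card = (n + 1 - ∑ i, s i) * n.descFactorial k := by
  induction k with
  | zero =>
    intro n s hs hn
    haveI : Subsingleton (Fin (0+1)) := Fin.subsingleton_one
    rw [Fin.sum_univ_one] at hn ⊢
    rw [Nat.descFactorial_zero, Nat.mul_one]
    rw [show (n + 1 - s 0) = (Finset.Icc (s 0) n).card by rw [Nat.card_Icc]]
    apply Finset.card_nbij' (fun r => r 0) (fun m => fun _ => m)
    · intro r hr
      simp only [Finset.mem_coe] at hr ⊢
      rw [mem_stockSet] at hr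
      obtain ⟨hb, _, hcond⟩ := hr
      have hc0 := hcond 0
      have h1 : (Finset.univ.filter (fun i : Fin (0+1) => r i ≤ r 0)) = Finset.univ := by
        apply Finset.filter_true_of_mem
        intro i _
        rw [Subsingleton.elim i 0]
      rw [h1, Fin.sum_univ_one] at hc0
      rw [Finset.mem_Icc]
      exact ⟨hc0, (hb 0).2⟩
    · intro m hm
      simp only [Finset.mem_coe] at hm ⊢
      rw [Finset.mem_Icc] at hm
      rw [mem_stockSet]
      refine ⟨fun j => ⟨le_trans (hs 0) hm.1, hm.2⟩,
        fun a b _ => Subsingleton.elim a b, ?_⟩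
      intro j
      exact le_trans (Finset.sum_le_sum_of_subset (Finset.filter_subset _ _))
        ((Fin.sum_univ_one s) ▸ hm.1)
    · intro r hr
      funext i
      rw [Subsingleton.elim i 0]
    · intro m hm
      rfl
  | succ k ih =>
    intro n s hs hn
    have hS1 : 1 ≤ ∑ i, s i := by
      calc 1 ≤ s 0 := hs 0
        _ ≤ ∑ i, s i := Finset.single_le_sum (fun i _ => Nat.zero_le _) (Finset.mem_univ _)
    have key : (stockSet (k+2) n s).card
        = ∑ p ∈ (Finset.univ ×ˢ Finset.Icc (∑ i, s i) n : Finset (Fin (k+2) × ℕ)),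
            ((stockSet (k+2) n s).filter fun r => (amax r, r (amax r)) = p).card := by
      apply Finset.card_eq_sum_card_fiberwise
      intro r hr
      simp only [Finset.mem_coe] at hr ⊢
      rw [mem_stockSet] at hr
      obtain ⟨hb, hinj, hcond⟩ := hr
      rw [Finset.mem_product]
      refine ⟨Finset.mem_univ _, ?_⟩
      rw [Finset.mem_Icc]
      constructor
      · have hc := hcond (amax r)
        have hfull : (Finset.univ.filter (fun i => r i ≤ r (amax r))) = Finset.univ := by
          apply Finset.filter_true_of_mem
          intro i _; exact amax_spec r i
        rw [hfull] at hc
        exact hc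
      · exact (hb (amax r)).2
    rw [key, Finset.sum_product]
    have fib : ∀ j : Fin (k+2), ∀ m ∈ Finset.Icc (∑ i, s i) n,
        ((stockSet (k+2) n s).filter fun r => (amax r, r (amax r)) = (j, m)).card
          = (m - (∑ i, s i) + s j) * (m-1).descFactorial k := by
      intro j m hm
      clear key
      have hbr : (∑ i : Fin (k+2), s i) = ∑ i : Fin (k+1+1), s i := rfl
      rw [fiber_card s hs j m hm]
      rw [Finset.mem_Icc] at hm
      have h1 : 1 ≤ s j := hs j
      have hsj : s j ≤ ∑ i, s i :=
        Finset.single_le_sum (f := s) (fun i _ => Nat.zero_le _) (Finset.mem_univ _)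
      have hsum : (∑ i, s (j.succAbove i)) = (∑ i, s i) - s j := by
        have h : (∑ i : Fin (k+2), s i) = s j + ∑ i, s (j.succAbove i) :=
          Fin.sum_univ_succAbove s j
        omega
      rw [ih (m-1) (fun i => s (j.succAbove i)) (fun i => hs _) (by rw [hsum]; omega)]
      rw [hsum]
      clear ih
      congr 1
      omega
    calc ∑ j : Fin (k+2), ∑ m ∈ Finset.Icc (∑ i, s i) n,
          ((stockSet (k+2) n s).filter fun r => (amax r, r (amax r)) = (j, m)).card
        = ∑ j : Fin (k+2), ∑ m ∈ Finset.Icc (∑ i, s i) n,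
            (m - (∑ i, s i) + s j) * (m-1).descFactorial k := by
          apply Finset.sum_congr rfl
          intro j _
          exact Finset.sum_congr rfl (fib j)
      _ = ∑ m ∈ Finset.Icc (∑ i, s i) n,
            ∑ j : Fin (k+2), (m - (∑ i, s i) + s j) * (m-1).descFactorial k :=
          Finset.sum_comm
      _ = ∑ m ∈ Finset.Icc (∑ i, s i) n,
            ((k+2) * (m - (∑ i, s i)) + (∑ i, s i)) * (m-1).descFactorial k := by
          apply Finset.sum_congr rfl
          intro m _
          rw [← Finset.sum_mul]
          congr 1
          rw [Finset.sum_add_distrib, Finset.sum_const, Finset.card_univ, Fintype.card_fin,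
            smul_eq_mul]
      _ = (n + 1 - ∑ i, s i) * n.descFactorial (k+1) := stock_alg k _ hS1 n

/-- Counting feasible stock-out index vectors: `h ≥ 1` products with stock levels
`s 0, …, s (h-1) ≥ 1` stock out at distinct indices `r j ∈ {1,…,n'}` of an arrival
sequence of length `n' ≥ Σ s`, where each `r j` must be at least the total stock of
products stocked out at or before index `r j`.  The number of such vectors equals
`(n'+1)!/(n'+1-h)! − (n')!/(n'+1-h)! · (Σ s)`. -/
theorem stockout_vector_count (h n' : ℕ) (hh : 1 ≤ h) (s : Fin h → ℕ)
    (hs : ∀ i, 1 ≤ s i) (hn : (∑ i, s i) ≤ n') :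
    (Set.ncard {r : Fin h → ℕ |
        Function.Injective r ∧
        (∀ j, 1 ≤ r j ∧ r j ≤ n') ∧
        (∀ j, (∑ i ∈ Finset.univ.filter (fun i => r i ≤ r j), s i) ≤ r j)} : ℚ)
      = (Nat.factorial (n' + 1) : ℚ) / (Nat.factorial (n' + 1 - h))
        - (Nat.factorial n' : ℚ) / (Nat.factorial (n' + 1 - h)) * (∑ i, s i) := by
  obtain ⟨k, rfl⟩ : ∃ k, h = k + 1 := ⟨h - 1, by omega⟩
  have hset : {r : Fin (k+1) → ℕ |
        Function.Injective r ∧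
        (∀ j, 1 ≤ r j ∧ r j ≤ n') ∧
        (∀ j, (∑ i ∈ Finset.univ.filter (fun i => r i ≤ r j), s i) ≤ r j)}
      = ↑(stockSet (k+1) n' s) := by
    ext r
    rw [Finset.mem_coe, mem_stockSet]
    simp only [Set.mem_setOf_eq]
    tauto
  rw [hset, Set.ncard_coe_finset, stockSet_card k n' s hs hn]
  set S := ∑ i, s i with hSdef
  have hkS : k + 1 ≤ S := by
    calc k + 1 = ∑ _i : Fin (k+1), 1 := by simp
      _ ≤ S := Finset.sum_le_sum (fun i _ => hs i)
  have heq : n' + 1 - (k+1) = n' - k := by omega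
  rw [heq]
  have hfac1 : (n' - k).factorial * (n'+1).descFactorial (k+1) = (n'+1).factorial := by
    rw [← heq]; exact Nat.factorial_mul_descFactorial (by omega)
  have hfac2 : (n' - k).factorial * n'.descFactorial k = n'.factorial := by
    have : n' - k = n' - k := rfl
    exact (by rw [show n' - k = n' - k from rfl]; exact Nat.factorial_mul_descFactorial (by omega))
  have hfpos : (0:ℚ) < ((n' - k).factorial : ℚ) := by positivity
  have e1 : ((n'+1).factorial : ℚ) / ((n' - k).factorial : ℚ)
      = ((n'+1).descFactorial (k+1) : ℚ) := by
    rw [div_eq_iff (ne_of_gt hfpos), mul_comm, ← Nat.cast_mul, hfac1]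
  have e2 : ((n').factorial : ℚ) / ((n' - k).factorial : ℚ)
      = ((n').descFactorial k : ℚ) := by
    rw [div_eq_iff (ne_of_gt hfpos), mul_comm, ← Nat.cast_mul, hfac2]
  rw [e1, e2]
  have hD : (n'+1).descFactorial (k+1) = (n'+1) * n'.descFactorial k :=
    Nat.succ_descFactorial_succ n' k
  rw [hD]
  have hc : ((n' + 1 - S : ℕ) : ℚ) = (n' : ℚ) + 1 - (S : ℚ) := by
    have : S ≤ n' + 1 := by omega
    push_cast [Nat.cast_sub this]
    ring
  push_cast [hc]
  ring
end

section
/- For any finite set A, positive reals (f_a)_{a∈A}, nonnegative integers (n_a)_{a∈A}, define the attraction probabilities on any subset S ⊆ A by P_{a:S} = f_a / Σ_{a'∈S} f_{a'} (no null alternative). If n = Σ_a n_a and one product a* with n_{a*} = s_{a*} stocks out, then the probability that the sales vector equals (n_a) given n total arrivals equals [ (n − n_{a*})! / Π_{a≠a*} n_a! · Π_{a≠a*} P_{a:A\{a*}}^{n_a} ] · Σ_{m=0}^{n−n_{a*}} C(n_{a*}−1+m, m) · P_{a*:A}^{n_{a*}} · (1 − P_{a*:A})^m, provided the attraction model satisfies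 P_{a:A} = (1 − P_{a*:A}) · P_{a:A\{a*}} for all a ≠ a*. -/
open Finset

private lemma card_filter_comp_equiv {n N : ℕ} {A : Type*} [DecidableEq A]
    (C : Finset (Fin n)) (e : {x // x ∈ C} ≃ Fin N) (a : Fin n → A) (p : A) :
    ((univ : Finset (Fin N)).filter fun k => a (e.symm k).val = p).card
      = (C.filter fun i => a i = p).card := by
  apply Finset.card_nbij (i := fun k => (e.symm k).val)
  · intro k hk
    simp only [mem_coe, mem_filter, mem_univ, true_and] at hk ⊢
    exact ⟨(e.symm k).2, hk⟩
  · intro k _ k' _ h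
    exact e.symm.injective (Subtype.ext h)
  · intro i hi
    simp only [Set.mem_image, mem_coe, mem_filter, mem_univ, true_and] at hi ⊢
    refine ⟨e ⟨i, hi.1⟩, ?_, ?_⟩ <;> simp [hi.2]

private lemma count_funs {B : Type*} [Fintype B] [DecidableEq B] :
    ∀ (N : ℕ) (g : B → ℕ), (∑ p, g p) = N →
    ((((univ : Finset (Fin N → B)).filter
        (fun b => ∀ p, (univ.filter fun i => b i = p).card = g p)).card : ℝ)
      = (N.factorial : ℝ) / ∏ p, ((g p).factorial : ℝ)) := by
  intro N
  induction N with
  | zero =>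
    intro g hg
    have hg0 : ∀ p, g p = 0 := by
      intro p
      have := Finset.sum_eq_zero_iff.mp hg p (mem_univ p)
      exact this
    have : ((univ : Finset (Fin 0 → B)).filter
        (fun b => ∀ p, (univ.filter fun i => b i = p).card = g p)) = univ := by
      apply filter_true_of_mem
      intro b _ p
      simp [hg0 p]
    rw [this]
    simp [hg0]
  | succ N ih =>
    intro g hg
    have hprodpos : (0:ℝ) < ∏ p, ((g p).factorial : ℝ) :=
      Finset.prod_pos fun p _ => by positivity
    rw [Finset.card_eq_sum_card_fiberwise (f := fun b => b 0) (t := univ)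
      (fun _ _ => mem_univ _)]
    have key : ∀ x : B, 1 ≤ g x →
        ((((univ : Finset (Fin (N+1) → B)).filter
          (fun b => ∀ p, (univ.filter fun i => b i = p).card = g p)).filter
            (fun b => b 0 = x)).card
        = (((univ : Finset (Fin N → B)).filter
          (fun c => ∀ p, (univ.filter fun i => c i = p).card
              = if p = x then g p - 1 else g p)).card)) := by
      intro x hx
      apply Finset.card_nbij' (i := fun b => Fin.tail b) (j := fun c => (Fin.cons x c : Fin (N+1) → B))
      · intro b hb
        simp only [mem_coe, mem_filter, mem_univ, true_and] at hb ⊢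
        obtain ⟨hb, hb0⟩ := hb
        intro p
        have hrec := Fin.card_filter_univ_succ' (fun i => b i = p)
        have := hb p
        rw [hrec] at this
        simp only [hb0] at this
        have htail : (univ.filter fun i => Fin.tail b i = p).card
            = (univ.filter fun i : Fin N => b i.succ = p).card := by
          rfl
        rw [htail]
        by_cases hpx : p = x
        · rw [if_pos hpx]
          rw [hpx] at this ⊢
          rw [if_pos rfl] at this
          omega
        · rw [if_neg hpx]
          rw [if_neg (fun h => hpx h.symm)] at this
          omega
      · intro c hc
        simp only [mem_coe, mem_filter, mem_univ, true_and] at hc ⊢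
        refine ⟨?_, Fin.cons_zero _ _⟩
        intro p
        have hrec := Fin.card_filter_univ_succ' (fun i => (Fin.cons x c : Fin (N+1) → B) i = p)
        rw [hrec]
        simp only [Fin.cons_zero, Fin.cons_succ]
        have := hc p
        by_cases hpx : p = x
        · subst hpx; rw [if_pos rfl] at this; rw [this]; simp; omega
        · rw [if_neg hpx] at this
          rw [this, if_neg (fun h => hpx h.symm)]
          omega
      · intro b hb
        simp only [mem_coe, mem_filter] at hb
        rw [← hb.2]
        exact Fin.cons_self_tail b
      · intro c _
        funext k
        simp [Fin.tail]
    have keyzero : ∀ x : B, g x = 0 →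
        ((((univ : Finset (Fin (N+1) → B)).filter
          (fun b => ∀ p, (univ.filter fun i => b i = p).card = g p)).filter
            (fun b => b 0 = x)).card = 0) := by
      intro x hx
      rw [Finset.card_eq_zero, Finset.filter_eq_empty_iff]
      rintro b hb hb0
      simp only [mem_filter, mem_univ, true_and] at hb
      have := hb x
      have h0 : (0 : Fin (N+1)) ∈ univ.filter fun i => b i = x := by
        simp [hb0]
      have : 0 < (univ.filter fun i : Fin (N+1) => b i = x).card := card_pos.mpr ⟨0, h0⟩
      omega
    have main : ∀ x : B,
        (((((univ : Finset (Fin (N+1) → B)).filter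
          (fun b => ∀ p, (univ.filter fun i => b i = p).card = g p)).filter
            (fun b => b 0 = x)).card : ℝ))
        = (g x : ℝ) * ((N.factorial : ℝ) / ∏ p, ((g p).factorial : ℝ)) := by
      intro x
      by_cases hx : 1 ≤ g x
      · rw [key x hx]
        set g' : B → ℕ := fun p => if p = x then g p - 1 else g p with hg'
        have hsum' : (∑ p, g' p) = N := by
          have h1 : ∑ p, (g' p + if p = x then 1 else 0) = ∑ p, g p := by
            apply Finset.sum_congr rfl
            intro p _
            by_cases hpx : p = x
            · have hx1 : g' p = g p - 1 := by simp [hg', hpx]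
              rw [hx1, if_pos hpx, hpx]
              omega
            · simp [hg', hpx]
          rw [Finset.sum_add_distrib, Finset.sum_ite_eq' univ x (fun _ => 1)] at h1
          simp only [mem_univ, if_pos] at h1
          omega
        rw [ih g' hsum']
        have hfac : ((g x).factorial : ℝ) = (g x : ℝ) * ((g x - 1).factorial : ℝ) := by
          have h : (g x).factorial = g x * (g x - 1).factorial := by
            obtain ⟨k, hk⟩ := Nat.exists_eq_succ_of_ne_zero (by omega : g x ≠ 0)
            rw [hk]
            simp [Nat.factorial_succ]
          exact_mod_cast h
        have hsplit : ∏ p, ((g p).factorial : ℝ)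
            = ((g x).factorial : ℝ) * ∏ p ∈ univ.erase x, ((g p).factorial : ℝ) :=
          (Finset.mul_prod_erase univ _ (mem_univ x)).symm
        have hsplit' : ∏ p, ((g' p).factorial : ℝ)
            = ((g x - 1).factorial : ℝ) * ∏ p ∈ univ.erase x, ((g p).factorial : ℝ) := by
          rw [(Finset.mul_prod_erase univ (fun p => ((g' p).factorial : ℝ)) (mem_univ x)).symm]
          congr 1
          · simp [hg']
          · apply Finset.prod_congr rfl
            intro p hp
            simp only [mem_erase] at hp
            simp [hg', hp.1]
        rw [hsplit, hsplit', hfac]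
        have h1 : ((g x - 1).factorial : ℝ) ≠ 0 := by positivity
        have h2 : (∏ p ∈ univ.erase x, ((g p).factorial : ℝ)) ≠ 0 := by
          apply ne_of_gt
          exact Finset.prod_pos fun p _ => by positivity
        have h3 : (g x : ℝ) ≠ 0 := by
          simp only [ne_eq, Nat.cast_eq_zero]; omega
        field_simp
      · have hx0 : g x = 0 := by omega
        rw [keyzero x hx0, hx0]
        simp
    rw [Nat.cast_sum]
    rw [Finset.sum_congr rfl (fun x _ => main x)]
    rw [← Finset.sum_mul]
    rw [← Nat.cast_sum, hg]
    rw [Nat.factorial_succ]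
    push_cast
    ring

private lemma sum_powerset_sup (n K : ℕ) (hK1 : 1 ≤ K) (hKn : K ≤ n) (w : ℝ) :
    ∑ S ∈ powersetCard K (univ : Finset (Fin n)),
        w ^ ((univ.filter fun i => i ∉ S ∧ (S.filter (· < i)).card < K).card)
      = ∑ j ∈ range (n - K + 1), ((K - 1 + j).choose j : ℝ) * w ^ j := by
  have hexp : ∀ S ∈ powersetCard K (univ : Finset (Fin n)),
      (univ.filter fun i => i ∉ S ∧ (S.filter (· < i)).card < K).card
        = S.sup Fin.val - (K - 1) ∧ S.sup Fin.val < n := by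
    intro S hS
    rw [mem_powersetCard] at hS
    have hcard : S.card = K := hS.2
    have hne : S.Nonempty := by rw [← card_pos, hcard]; omega
    obtain ⟨M, hM, hsup⟩ := Finset.exists_mem_eq_sup S hne Fin.val
    have hMmax : ∀ i ∈ S, i ≤ M := by
      intro i hi
      have h := Finset.le_sup (f := Fin.val) hi
      rw [hsup] at h
      exact h
    have herase : (S.erase M).card = K - 1 := by
      rw [card_erase_of_mem hM, hcard]
    have hset : (univ.filter fun i => i ∉ S ∧ (S.filter (· < i)).card < K)
        = (Iio M).filter (· ∉ S) := by
      ext i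
      simp only [mem_filter, mem_univ, true_and, mem_Iio]
      constructor
      · rintro ⟨hiS, hcnt⟩
        refine ⟨?_, hiS⟩
        by_contra hMi
        push_neg at hMi
        rcases lt_or_eq_of_le hMi with h | h
        · have : S.filter (· < i) = S := by
            apply Finset.filter_true_of_mem
            intro i' hi'
            exact lt_of_le_of_lt (hMmax i' hi') h
          rw [this, hcard] at hcnt
          omega
        · exact hiS (h ▸ hM)
      · rintro ⟨hiM, hiS⟩
        refine ⟨hiS, ?_⟩
        have hsub : S.filter (· < i) ⊆ S.erase M := by
          intro i' hi'
          simp only [mem_filter] at hi'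
          simp only [mem_erase]
          exact ⟨ne_of_lt (lt_trans hi'.2 hiM), hi'.1⟩
        have := Finset.card_le_card hsub
        rw [herase] at this
        omega
    have hfilterin : (Iio M).filter (· ∈ S) = S.erase M := by
      ext i'
      simp only [mem_filter, mem_Iio, mem_erase]
      constructor
      · rintro ⟨h1, h2⟩; exact ⟨ne_of_lt h1, h2⟩
      · rintro ⟨h1, h2⟩; exact ⟨lt_of_le_of_ne (hMmax _ h2) h1, h2⟩
    have hsplit := Finset.card_filter_add_card_filter_not
      (s := Iio M) (p := (· ∈ S))
    rw [hfilterin, herase, Fin.card_Iio] at hsplit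
    rw [hsup]
    constructor
    · rw [hset]
      omega
    · exact M.isLt
  rw [← Finset.sum_fiberwise_of_maps_to (g := fun S => S.sup Fin.val) (t := range n)
    (fun S hS => mem_range.mpr (hexp S hS).2)]
  have hcount : ∀ v, v < n → ((powersetCard K (univ : Finset (Fin n))).filter
      (fun S => S.sup Fin.val = v)).card = v.choose (K - 1) := by
    intro v hv
    have hbij : ((powersetCard K (univ : Finset (Fin n))).filter
        (fun S => S.sup Fin.val = v)).card
        = (powersetCard (K-1) (Iio (⟨v, hv⟩ : Fin n))).card := by
      apply card_nbij' (i := fun S => S.erase ⟨v, hv⟩) (j := fun R => insert ⟨v, hv⟩ R)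
      · intro S hS
        simp only [mem_coe, mem_filter, mem_powersetCard] at hS
        obtain ⟨⟨_, hcard⟩, hsupv⟩ := hS
        have hne : S.Nonempty := by rw [← card_pos, hcard]; omega
        obtain ⟨M, hM, hsup⟩ := Finset.exists_mem_eq_sup S hne Fin.val
        have hMv : M = ⟨v, hv⟩ := by
          apply Fin.ext
          show (M : ℕ) = v
          rw [← hsupv, hsup]
        rw [hMv] at hM hsup
        rw [mem_coe, mem_powersetCard]
        constructor
        · intro i hi
          simp only [mem_erase] at hi
          rw [mem_Iio]
          have hle : (i : ℕ) ≤ v := by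
            have := Finset.le_sup (f := Fin.val) hi.2
            rw [hsupv] at this
            exact this
          have hne' : (i : ℕ) ≠ v := fun h => hi.1 (Fin.ext h)
          rw [Fin.lt_def]
          show (i : ℕ) < v
          omega
        · rw [card_erase_of_mem hM, hcard]
      · intro R hR
        rw [mem_coe, mem_powersetCard] at hR
        obtain ⟨hRsub, hRcard⟩ := hR
        have hvR : (⟨v, hv⟩ : Fin n) ∉ R := by
          intro h
          have := hRsub h
          rw [mem_Iio] at this
          exact lt_irrefl _ this
        simp only [mem_coe, mem_filter, mem_powersetCard]
        refine ⟨⟨subset_univ _, ?_⟩, ?_⟩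
        · rw [card_insert_of_notMem hvR, hRcard]
          omega
        · rw [Finset.sup_insert]
          have hle : R.sup Fin.val ≤ v := by
            apply Finset.sup_le
            intro i hi
            have := hRsub hi
            rw [mem_Iio, Fin.lt_def] at this
            have h2 : (i : ℕ) < v := this
            omega
          exact sup_eq_left.mpr hle
      · intro S hS
        simp only [mem_coe, mem_filter, mem_powersetCard] at hS
        obtain ⟨⟨_, hcard⟩, hsupv⟩ := hS
        have hne : S.Nonempty := by rw [← card_pos, hcard]; omega
        obtain ⟨M, hM, hsup⟩ := Finset.exists_mem_eq_sup S hne Fin.val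
        have hMv : M = ⟨v, hv⟩ := by
          apply Fin.ext
          show (M : ℕ) = v
          rw [← hsupv, hsup]
        rw [hMv] at hM
        exact insert_erase hM
      · intro R hR
        rw [mem_coe, mem_powersetCard] at hR
        have hvR : (⟨v, hv⟩ : Fin n) ∉ R := by
          intro h
          have := hR.1 h
          rw [mem_Iio] at this
          exact lt_irrefl _ this
        exact erase_insert hvR
    rw [hbij, card_powersetCard, Fin.card_Iio]
  have hstep : ∀ v ∈ range n,
      (∑ S ∈ (powersetCard K (univ : Finset (Fin n))).filter (fun S => S.sup Fin.val = v),
        w ^ ((univ.filter fun i => i ∉ S ∧ (S.filter (· < i)).card < K).card))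
      = (v.choose (K-1) : ℝ) * w ^ (v - (K - 1)) := by
    intro v hv
    rw [mem_range] at hv
    rw [Finset.sum_congr rfl (fun S hS => ?_), Finset.sum_const, hcount v hv,
      nsmul_eq_mul]
    simp only [mem_filter] at hS
    rw [(hexp S hS.1).1, hS.2]
  rw [Finset.sum_congr rfl hstep]
  rw [range_eq_Ico, ← Finset.sum_Ico_consecutive _ (Nat.zero_le (K-1)) (by omega : K-1 ≤ n)]
  have h0 : ∑ v ∈ Ico 0 (K-1), (v.choose (K-1) : ℝ) * w ^ (v - (K-1)) = 0 := by
    apply Finset.sum_eq_zero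
    intro v hv
    rw [mem_Ico] at hv
    simp [Nat.choose_eq_zero_of_lt hv.2]
  rw [h0, zero_add, Finset.sum_Ico_eq_sum_range]
  rw [show n - (K-1) = n - K + 1 by omega]
  apply Finset.sum_congr rfl
  intro j _
  rw [show K - 1 + j - (K - 1) = j by omega]
  have h := Nat.choose_symm (Nat.le_add_left j (K-1))
  rw [Nat.add_sub_cancel] at h
  rw [h]

/-- Single stock-out, no null alternative, attraction model `P_{a:S} = f_a / Σ_{a'∈S} f_{a'}`:
if `n` customers choose sequentially from `A` (product `a*` being removed once it sells
`s a* = m a*` units, no other product stocking out), then the probability that the sales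
vector equals `(m a)_{a∈A}` is
`[(n − m_{a*})!/Π_{a≠a*} m_a! · Π_{a≠a*} P_{a:A∖{a*}}^{m_a}] ·
 Σ_{j=0}^{n−m_{a*}} C(m_{a*}−1+j, j) · P_{a*:A}^{m_{a*}} · (1−P_{a*:A})^j`,
provided `P_{a:A} = (1 − P_{a*:A}) · P_{a:A∖{a*}}` for all `a ≠ a*`. -/
theorem single_stockout_sales_probability
    (A : Type*) [Fintype A] [DecidableEq A] [Nonempty A]
    (f : A → ℝ) (hf : ∀ p, 0 < f p)
    (P : A → Finset A → ℝ) (hP : ∀ p S, P p S = f p / ∑ p' ∈ S, f p')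
    (s : A → ℕ) (hs : ∀ p, 1 ≤ s p)
    (aStar : A) (m : A → ℕ) (n : ℕ)
    (hn : (∑ p, m p) = n)
    (hstar : m aStar = s aStar) (hstar1 : 1 ≤ m aStar)
    (hrest : ∀ p, p ≠ aStar → m p < s p)
    (hIIA : ∀ p, p ≠ aStar →
      P p Finset.univ = (1 - P aStar Finset.univ) * P p (Finset.univ \ {aStar})) :
    (∑ a ∈ (Finset.univ : Finset (Fin n → A)).filter (fun a =>
        (∀ p, (Finset.univ.filter (fun i => a i = p)).card = m p) ∧
        (∀ i : Fin n,
          (Finset.univ.filter (fun i' : Fin n => i' < i ∧ a i' = a i)).card < s (a i))),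
        ∏ i : Fin n,
          P (a i) (Finset.univ.filter (fun p =>
            (Finset.univ.filter (fun i' : Fin n => i' < i ∧ a i' = p)).card < s p)))
      = ((Nat.factorial (n - m aStar) : ℝ)
            / (∏ p ∈ Finset.univ \ {aStar}, (Nat.factorial (m p) : ℝ))
          * ∏ p ∈ Finset.univ \ {aStar}, P p (Finset.univ \ {aStar}) ^ m p)
        * ∑ j ∈ Finset.range (n - m aStar + 1),
            ((m aStar - 1 + j).choose j : ℝ)
              * P aStar Finset.univ ^ m aStar
              * (1 - P aStar Finset.univ) ^ j := by
  classical
  have hKn : m aStar ≤ n := by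
    rw [← hn]
    exact Finset.single_le_sum (f := m) (fun p _ => Nat.zero_le _) (mem_univ aStar)
  have hn0 : 0 < n := lt_of_lt_of_le hstar1 hKn
  -- notation
  set q : ℝ := P aStar Finset.univ with hq
  set w : ℝ := 1 - q with hw
  -- the "number of other sales before stockout" as a function of the star-position set
  set jS : Finset (Fin n) → ℕ := fun S =>
    (univ.filter fun i => i ∉ S ∧ (S.filter (· < i)).card < m aStar).card with hjS
  -- Step 1 : feasibility is automatic
  have hfeas : ∀ a : Fin n → A,
      (∀ p, (univ.filter (fun i => a i = p)).card = m p) →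
      ∀ i : Fin n, ((univ.filter (fun i' : Fin n => i' < i ∧ a i' = a i)).card < m (a i)) := by
    intro a ha i
    have hsub : (univ.filter (fun i' : Fin n => i' < i ∧ a i' = a i))
        ⊆ (univ.filter (fun i' => a i' = a i)).erase i := by
      intro i' hi'
      simp only [mem_filter, mem_univ, true_and, mem_erase] at hi' ⊢
      exact ⟨ne_of_lt hi'.1, hi'.2⟩
    have h1 := Finset.card_le_card hsub
    have hmem : i ∈ univ.filter (fun i' => a i' = a i) := by simp
    have h2 : 0 < (univ.filter (fun i' => a i' = a i)).card := card_pos.mpr ⟨i, hmem⟩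
    rw [card_erase_of_mem hmem, ha (a i)] at h1
    rw [ha (a i)] at h2
    omega
  have hms : ∀ p, m p ≤ s p := by
    intro p
    by_cases h : p = aStar
    · rw [h, hstar]
    · exact le_of_lt (hrest _ h)
  have hfilter : ((Finset.univ : Finset (Fin n → A)).filter (fun a =>
        (∀ p, (Finset.univ.filter (fun i => a i = p)).card = m p) ∧
        (∀ i : Fin n,
          (Finset.univ.filter (fun i' : Fin n => i' < i ∧ a i' = a i)).card < s (a i))))
      = (Finset.univ : Finset (Fin n → A)).filter (fun a =>
          ∀ p, (Finset.univ.filter (fun i => a i = p)).card = m p) := by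
    apply Finset.filter_congr
    intro a _
    constructor
    · exact And.left
    · intro h
      exact ⟨h, fun i => lt_of_lt_of_le (hfeas a h i) (hms (a i))⟩
  rw [hfilter]
  -- Step 2 : per-sequence product
  have hprod : ∀ a ∈ (Finset.univ : Finset (Fin n → A)).filter (fun a =>
          ∀ p, (Finset.univ.filter (fun i => a i = p)).card = m p),
      (∏ i : Fin n,
          P (a i) (Finset.univ.filter (fun p =>
            (Finset.univ.filter (fun i' : Fin n => i' < i ∧ a i' = p)).card < s p)))
        = (q ^ m aStar * ∏ p ∈ Finset.univ \ {aStar}, P p (Finset.univ \ {aStar}) ^ m p)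
            * w ^ (jS (univ.filter fun i => a i = aStar)) := by
    intro a ha
    simp only [mem_filter, mem_univ, true_and] at ha
    have hlt := hfeas a ha
    have hcle : ∀ (i : Fin n) (p : A),
        (univ.filter (fun i' : Fin n => i' < i ∧ a i' = p)).card ≤ m p := by
      intro i p
      rw [← ha p]
      apply Finset.card_le_card
      intro i' hi'
      simp only [mem_filter, mem_univ, true_and] at hi' ⊢
      exact hi'.2
    have havail1 : ∀ i : Fin n,
        (univ.filter (fun i' : Fin n => i' < i ∧ a i' = aStar)).card < m aStar →
        (univ.filter (fun p =>
          (univ.filter (fun i' : Fin n => i' < i ∧ a i' = p)).card < s p)) = univ := by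
      intro i hi
      apply Finset.filter_true_of_mem
      intro p _
      by_cases hp : p = aStar
      · subst hp
        rw [← hstar]
        exact hi
      · exact lt_of_le_of_lt (hcle i p) (hrest p hp)
    have havail2 : ∀ i : Fin n,
        ¬ ((univ.filter (fun i' : Fin n => i' < i ∧ a i' = aStar)).card < m aStar) →
        (univ.filter (fun p =>
          (univ.filter (fun i' : Fin n => i' < i ∧ a i' = p)).card < s p))
          = univ \ {aStar} := by
      intro i hi
      ext p
      simp only [mem_filter, mem_univ, true_and, mem_sdiff, mem_singleton]
      constructor
      · intro h hp
        subst hp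
        rw [← hstar] at h
        exact hi h
      · intro hp
        exact lt_of_le_of_lt (hcle i p) (hrest p hp)
    rw [← Finset.prod_filter_mul_prod_filter_not univ (fun i => a i = aStar)]
    have hA : (∏ i ∈ univ.filter (fun i => a i = aStar),
        P (a i) (univ.filter (fun p =>
          (univ.filter (fun i' : Fin n => i' < i ∧ a i' = p)).card < s p)))
        = q ^ m aStar := by
      rw [Finset.prod_congr rfl (fun i hi => ?_), Finset.prod_const, ha aStar]
      simp only [mem_filter, mem_univ, true_and] at hi
      have hci : (univ.filter (fun i' : Fin n => i' < i ∧ a i' = aStar)).card < m aStar := by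
        have := hlt i
        rw [hi] at this
        exact this
      rw [havail1 i hci, hi]
    have hB : (∏ i ∈ univ.filter (fun i => ¬ a i = aStar),
        P (a i) (univ.filter (fun p =>
          (univ.filter (fun i' : Fin n => i' < i ∧ a i' = p)).card < s p)))
        = w ^ (jS (univ.filter fun i => a i = aStar))
            * ∏ p ∈ Finset.univ \ {aStar}, P p (Finset.univ \ {aStar}) ^ m p := by
      have hterm : ∀ i ∈ univ.filter (fun i => ¬ a i = aStar),
          P (a i) (univ.filter (fun p =>
            (univ.filter (fun i' : Fin n => i' < i ∧ a i' = p)).card < s p))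
          = (if (univ.filter (fun i' : Fin n => i' < i ∧ a i' = aStar)).card < m aStar
              then w else 1) * P (a i) (Finset.univ \ {aStar}) := by
        intro i hi
        simp only [mem_filter, mem_univ, true_and] at hi
        by_cases hc : (univ.filter (fun i' : Fin n => i' < i ∧ a i' = aStar)).card < m aStar
        · rw [if_pos hc, havail1 i hc]
          exact hIIA (a i) hi
        · rw [if_neg hc, havail2 i hc, one_mul]
      rw [Finset.prod_congr rfl hterm, Finset.prod_mul_distrib]
      congr 1
      · rw [Finset.prod_ite, Finset.prod_const, Finset.prod_const_one, mul_one]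
        congr 1
        rw [hjS]
        congr 1
        ext i
        simp only [mem_filter, mem_univ, true_and]
        have hswap : ((univ.filter (fun i' : Fin n => a i' = aStar)).filter (· < i))
            = univ.filter (fun i' : Fin n => i' < i ∧ a i' = aStar) := by
          ext i'
          simp only [mem_filter, mem_univ, true_and]
          tauto
        rw [hswap]
      · rw [← Finset.prod_fiberwise_of_maps_to (g := a) (t := Finset.univ \ {aStar})
          (fun i hi => by
            simp only [mem_filter, mem_univ, true_and] at hi
            simp [hi]) (fun i => P (a i) (Finset.univ \ {aStar}))]
        apply Finset.prod_congr rfl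
        intro p hp
        simp only [mem_sdiff, mem_univ, mem_singleton, true_and] at hp
        rw [Finset.prod_congr rfl (fun i hi => ?_), Finset.prod_const]
        · congr 1
          have heq : ((univ.filter (fun i => ¬ a i = aStar)).filter (fun i => a i = p))
              = univ.filter (fun i => a i = p) := by
            ext i
            simp only [mem_filter, mem_univ, true_and]
            constructor
            · exact And.right
            · intro h
              refine ⟨?_, h⟩
              rw [h]
              exact hp
          rw [heq, ha p]
        · simp only [mem_filter] at hi
          rw [hi.2]
    rw [hA, hB]
    ring
  rw [Finset.sum_congr rfl hprod, ← Finset.mul_sum]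
  -- Step 3 : sum over sequences
  have hsum2 : (∑ a ∈ (Finset.univ : Finset (Fin n → A)).filter (fun a =>
          ∀ p, (Finset.univ.filter (fun i => a i = p)).card = m p),
        w ^ (jS (univ.filter fun i => a i = aStar)))
      = ((n - m aStar).factorial : ℝ)
          / (∏ p ∈ Finset.univ \ {aStar}, ((m p).factorial : ℝ))
        * ∑ S ∈ powersetCard (m aStar) (univ : Finset (Fin n)), w ^ (jS S) := by
    have hgsum : (∑ p, (if p = aStar then 0 else m p)) = n - m aStar := by
      have h1 : (∑ p, m p) = (∑ p ∈ univ \ {aStar}, m p) + m aStar := by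
        rw [Finset.sum_eq_sum_sdiff_singleton_add (mem_univ aStar) m]
      have h2 : (∑ p, (if p = aStar then 0 else m p))
          = (∑ p ∈ univ \ {aStar}, (if p = aStar then 0 else m p)) + 0 := by
        rw [Finset.sum_eq_sum_sdiff_singleton_add (mem_univ aStar)
          (fun p => if p = aStar then 0 else m p)]
        simp
      have h3 : (∑ p ∈ univ \ {aStar}, (if p = aStar then 0 else m p))
          = ∑ p ∈ univ \ {aStar}, m p := by
        apply Finset.sum_congr rfl
        intro p hp
        simp only [mem_sdiff, mem_singleton] at hp
        rw [if_neg hp.2]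
      rw [h2, h3]
      omega
    have hcardS : ∀ S ∈ powersetCard (m aStar) (univ : Finset (Fin n)),
        (((univ : Finset (Fin n → A)).filter (fun a =>
            ∀ p, (univ.filter (fun i => a i = p)).card = m p)).filter
            (fun a => univ.filter (fun i => a i = aStar) = S)).card
          = ((univ : Finset (Fin (n - m aStar) → A)).filter
              (fun b => ∀ p, (univ.filter fun k => b k = p).card
                = if p = aStar then 0 else m p)).card := by
      intro S hS
      rw [mem_powersetCard] at hS
      have hSc : (Sᶜ : Finset (Fin n)).card = n - m aStar := by
        rw [card_compl, hS.2]
        simp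
      let e : {x // x ∈ (Sᶜ : Finset (Fin n))} ≃ Fin (n - m aStar) :=
        (Sᶜ.equivFin).trans (finCongr hSc)
      have hjb : ∀ (b : Fin (n - m aStar) → A) (k : Fin (n - m aStar)),
          (if h : ((e.symm k : {x // x ∈ (Sᶜ : Finset (Fin n))}) : Fin n) ∈ Sᶜ
            then b (e ⟨((e.symm k : {x // x ∈ (Sᶜ : Finset (Fin n))}) : Fin n), h⟩)
            else aStar) = b k := by
        intro b k
        rw [dif_pos (e.symm k).2]
        have h5 : (⟨((e.symm k : {x // x ∈ (Sᶜ : Finset (Fin n))}) : Fin n),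
            (e.symm k).2⟩ : {x // x ∈ (Sᶜ : Finset (Fin n))}) = e.symm k := Subtype.ext rfl
        rw [h5, Equiv.apply_symm_apply]
      apply Finset.card_nbij' (i := fun a => fun k => a ((e.symm k) : Fin n))
        (j := fun b => fun idx =>
          if h : idx ∈ (Sᶜ : Finset (Fin n)) then b (e ⟨idx, h⟩) else aStar)
      · intro a ha
        simp only [mem_coe, mem_filter, mem_univ, true_and] at ha ⊢
        obtain ⟨hcounts, hSa⟩ := ha
        intro p
        rw [card_filter_comp_equiv Sᶜ e a p]
        by_cases hp : p = aStar
        · subst hp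
          rw [if_pos rfl, Finset.card_eq_zero, Finset.filter_eq_empty_iff]
          intro idx hidx
          rw [Finset.mem_compl] at hidx
          intro hcon
          apply hidx
          rw [← hSa]
          simp [hcon]
        · rw [if_neg hp]
          have hcompl : (Sᶜ : Finset (Fin n)).filter (fun idx => a idx = p)
              = univ.filter (fun idx => a idx = p) := by
            ext idx
            simp only [mem_filter, Finset.mem_compl, mem_univ, true_and]
            constructor
            · exact And.right
            · intro h
              refine ⟨?_, h⟩
              intro hin
              rw [← hSa] at hin
              simp only [mem_filter, mem_univ, true_and] at hin
              exact hp (by rw [← h, hin])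
          rw [hcompl, hcounts p]
      · intro b hb
        simp only [mem_coe, mem_filter, mem_univ, true_and] at hb ⊢
        have hbno : ∀ k, b k ≠ aStar := by
          intro k hk
          have h0 := hb aStar
          rw [if_pos rfl, Finset.card_eq_zero, Finset.filter_eq_empty_iff] at h0
          exact h0 (mem_univ k) hk
        have hSa' : (univ.filter (fun idx =>
            (if h : idx ∈ (Sᶜ : Finset (Fin n)) then b (e ⟨idx, h⟩) else aStar) = aStar)) = S := by
          ext idx
          simp only [mem_filter, mem_univ, true_and]
          by_cases h : idx ∈ (Sᶜ : Finset (Fin n))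
          · rw [dif_pos h]
            have h' : idx ∉ S := Finset.mem_compl.mp h
            constructor
            · intro hcon
              exact absurd hcon (hbno _)
            · intro hin
              exact absurd hin h'
          · rw [dif_neg h]
            have h' : idx ∈ S := by
              by_contra hcon
              exact h (Finset.mem_compl.mpr hcon)
            constructor
            · intro _
              exact h'
            · intro _
              rfl
        refine ⟨?_, hSa'⟩
        intro p
        by_cases hp : p = aStar
        · subst hp
          rw [hSa', hS.2]
        · have h1 : (univ.filter (fun idx =>
              (if h : idx ∈ (Sᶜ : Finset (Fin n)) then b (e ⟨idx, h⟩) else aStar) = p))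
              = (Sᶜ : Finset (Fin n)).filter (fun idx =>
                (if h : idx ∈ (Sᶜ : Finset (Fin n)) then b (e ⟨idx, h⟩) else aStar) = p) := by
            ext idx
            simp only [mem_filter, mem_univ, true_and]
            constructor
            · intro h
              refine ⟨?_, h⟩
              by_contra hnot
              rw [dif_neg hnot] at h
              exact hp h.symm
            · exact And.right
          rw [h1, ← card_filter_comp_equiv Sᶜ e
            (fun idx => if h : idx ∈ (Sᶜ : Finset (Fin n)) then b (e ⟨idx, h⟩) else aStar) p]
          have h3 : ((univ : Finset (Fin (n - m aStar))).filter (fun k =>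
              (if h : ((e.symm k : {x // x ∈ (Sᶜ : Finset (Fin n))}) : Fin n) ∈ Sᶜ
                then b (e ⟨((e.symm k : {x // x ∈ (Sᶜ : Finset (Fin n))}) : Fin n), h⟩)
                else aStar) = p))
              = (univ : Finset (Fin (n - m aStar))).filter (fun k => b k = p) := by
            apply Finset.filter_congr
            intro k _
            rw [hjb b k]
          rw [h3]
          have h4 := hb p
          rw [if_neg hp] at h4
          exact h4
      · intro a ha
        simp only [mem_coe, mem_filter, mem_univ, true_and] at ha
        obtain ⟨hcounts, hSa⟩ := ha
        funext idx
        dsimp only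
        by_cases h : idx ∈ (Sᶜ : Finset (Fin n))
        · rw [dif_pos h]
          show a ((e.symm (e ⟨idx, h⟩) : {x // x ∈ (Sᶜ : Finset (Fin n))}) : Fin n) = a idx
          rw [Equiv.symm_apply_apply]
        · rw [dif_neg h]
          have h' : idx ∈ S := by
            by_contra hcon
            exact h (Finset.mem_compl.mpr hcon)
          rw [← hSa] at h'
          simp only [mem_filter, mem_univ, true_and] at h'
          exact h'.symm
      · intro b _
        funext k
        exact hjb b k
    have hcardR : ∀ S ∈ powersetCard (m aStar) (univ : Finset (Fin n)),
        ((((univ : Finset (Fin n → A)).filter (fun a =>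
            ∀ p, (univ.filter (fun i => a i = p)).card = m p)).filter
            (fun a => univ.filter (fun i => a i = aStar) = S)).card : ℝ)
          = ((n - m aStar).factorial : ℝ)
              / ∏ p ∈ Finset.univ \ {aStar}, ((m p).factorial : ℝ) := by
      intro S hS
      rw [hcardS S hS, count_funs (n - m aStar) _ hgsum]
      congr 1
      rw [Finset.prod_eq_prod_diff_singleton_mul (mem_univ aStar)
        (fun p => (((if p = aStar then 0 else m p) : ℕ).factorial : ℝ))]
      have h6 : (((if aStar = aStar then 0 else m aStar : ℕ)).factorial : ℝ) = 1 := by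
        rw [if_pos rfl]
        simp
      rw [h6, mul_one]
      apply Finset.prod_congr rfl
      intro p hp
      simp only [mem_sdiff, mem_singleton] at hp
      rw [if_neg hp.2]
    rw [← Finset.sum_fiberwise_of_maps_to
      (g := fun a : Fin n → A => univ.filter (fun i => a i = aStar))
      (t := powersetCard (m aStar) (univ : Finset (Fin n)))
      (fun a ha => by
        rw [mem_powersetCard]
        simp only [mem_filter, mem_univ, true_and] at ha
        exact ⟨subset_univ _, ha aStar⟩)
      (fun a => w ^ (jS (univ.filter fun i => a i = aStar)))]
    rw [Finset.mul_sum]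
    apply Finset.sum_congr rfl
    intro S hS
    have hterm : ∀ a ∈ ((univ : Finset (Fin n → A)).filter (fun a =>
          ∀ p, (univ.filter (fun i => a i = p)).card = m p)).filter
          (fun a => univ.filter (fun i => a i = aStar) = S),
        w ^ (jS (univ.filter fun i => a i = aStar)) = w ^ jS S := by
      intro a ha
      simp only [mem_filter] at ha
      rw [ha.2]
    rw [Finset.sum_congr rfl hterm, Finset.sum_const, nsmul_eq_mul, hcardR S hS]
  rw [hsum2]
  have hsum3 := sum_powerset_sup n (m aStar) hstar1 hKn w
  rw [hjS]
  rw [hsum3]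
  have hpull : ∑ j ∈ range (n - m aStar + 1),
        ((m aStar - 1 + j).choose j : ℝ) * q ^ m aStar * w ^ j
      = q ^ m aStar * ∑ j ∈ range (n - m aStar + 1),
        ((m aStar - 1 + j).choose j : ℝ) * w ^ j := by
    rw [Finset.mul_sum]
    apply Finset.sum_congr rfl
    intro j _
    ring
  rw [hpull]
  ring
end

section
/- Let k ≥ 1, n ≥ 1, and let ǎ_1,...,ǎ_k be distinct products with stock levels s_1,...,s_k ≥ 1 and Σ s_i ≤ n. The map sending a feasible stock-out index vector (r_1,...,r_k) (distinct indices in {1,...,n} with r_{σ(1)} < ... < r_{σ(k)} for the sorting permutation σ, satisfying the feasibility constraint r_j ≥ Σ_{i: r_i ≤ r_j} s_i) to the pair consisting of the ordered stock-out sequence (ǎ_{σ(1)},...,ǎ_{σ(k)}) and the block lengths (n^{[1]},...,n^{[k+1]}) = (r_{σ(1)}−1, r_{σ(2)}−r_{σ(1)}−1, ..., n−r_{σ(k)}) is a bijection onto the set of pairs (ordered stock-out sequence over {ǎ_1,...,ǎ_k}, block-length vector in ℕ_0^{k+1}) satisfying Σ_{j'=1}^{j}(n^{[j']}+1) ≥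 Σ_{j'=1}^{j} s_{σ(j')} for j = 1,...,k and Σ_{j=1}^{k+1}(n^{[j]}+1) = n+1. -/
open Finset

lemma sum_filter_fin_le {M : Type*} [AddCommMonoid M] {N : ℕ} (F : Fin N → M) {m : ℕ}
    (hm : m < N) :
    ∑ j' ∈ Finset.univ.filter (fun j' : Fin N => (j' : ℕ) ≤ m), F j'
      = ∑ i ∈ Finset.range (m + 1), (if h : i < N then F ⟨i, h⟩ else 0) := by
  rw [Finset.sum_filter]
  have : ∀ j' : Fin N, (if (j' : ℕ) ≤ m then F j' else 0)
      = (fun i : ℕ => if i ≤ m then (if h : i < N then F ⟨i, h⟩ else 0) else 0) (j' : ℕ) := by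
    intro j'; simp [j'.is_lt]
  simp_rw [this]
  rw [Fin.sum_univ_eq_sum_range (fun i : ℕ => if i ≤ m then (if h : i < N then F ⟨i, h⟩ else 0) else 0) N]
  rw [← Finset.sum_filter]
  have hset : (Finset.range N).filter (fun i => i ≤ m) = Finset.range (m + 1) := by
    ext i; simp; omega
  rw [hset]

lemma telescope_sum (k n : ℕ) (hk : 1 ≤ k) (r : Fin k → ℕ) (σ : Equiv.Perm (Fin k))
    (hsm : StrictMono (r ∘ σ)) (h1 : ∀ j, 1 ≤ r j) (h2 : ∀ j, r j ≤ n)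
    (c : Fin (k + 1) → ℕ)
    (hc : ∀ (i : ℕ) (h : i < k + 1), c ⟨i, h⟩ =
        (if hj : i < k then r (σ ⟨i, hj⟩) else n + 1)
          - (if hj0 : i = 0 then 0 else r (σ ⟨i - 1, by omega⟩)) - 1) :
    ∀ m, m ≤ k →
      (∑ i ∈ Finset.range (m + 1), (if h : i < k + 1 then c ⟨i, h⟩ + 1 else 0))
        = if h : m < k then r (σ ⟨m, h⟩) else n + 1 := by
  intro m
  induction m with
  | zero =>
    intro _
    rw [Finset.sum_range_one, dif_pos (by omega : (0:ℕ) < k + 1), hc 0 (by omega)]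
    have h0k : 0 < k := hk
    rw [dif_pos h0k, dif_pos rfl]
    have := h1 (σ ⟨0, h0k⟩)
    omega
  | succ m ih =>
    intro hm
    rw [Finset.sum_range_succ, ih (by omega), dif_pos (by omega : m + 1 < k + 1),
      hc (m + 1) (by omega), dif_pos (by omega : m < k),
      dif_neg (Nat.succ_ne_zero m)]
    simp only [Nat.add_sub_cancel]
    by_cases hmk : m + 1 < k
    · rw [dif_pos hmk]
      have hlt : r (σ ⟨m, by omega⟩) < r (σ ⟨m + 1, hmk⟩) :=
        hsm (by simp [Fin.lt_def])
      omega
    · rw [dif_neg hmk]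
      have hle : r (σ ⟨m, by omega⟩) ≤ n := h2 _
      omega

lemma sum_stock_eq {k : ℕ} (s r : Fin k → ℕ) (σ : Equiv.Perm (Fin k))
    (hsm : StrictMono (r ∘ σ)) (j : Fin k) :
    ∑ i ∈ Finset.univ.filter (fun i => r i ≤ r (σ j)), s i
      = ∑ j' ∈ Finset.univ.filter (fun j' => j' ≤ j), s (σ j') := by
  refine (Finset.sum_equiv σ (fun j' => ?_) (fun _ _ => rfl)).symm
  simp only [Finset.mem_filter, Finset.mem_univ, true_and]
  exact (hsm.le_iff_le (a := j') (b := j)).symm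

/-- Bijection underlying the sampling method: with `k` distinct products (indexed by
`Fin k`) with stock levels `s j ≥ 1`, `Σ s ≤ n`, the map sending a feasible stock-out
index vector `r` (distinct indices in `{1,…,n}` with `r_j` at least the total stock of
products stocked out at or before index `r_j`) to the pair consisting of the sorting
permutation `σ` (the stock-out order, `r∘σ` increasing) and the block-length vector
`(n^{[1]},…,n^{[k+1]}) = (r_{σ(1)}−1, r_{σ(2)}−r_{σ(1)}−1, …, n−r_{σ(k)})` is a
bijection onto the set of pairs `(σ, n^{[·]})` with
`Σ_{j'=1}^{j}(n^{[j']}+1) ≥ Σ_{j'=1}^{j} s_{σ(j')}` for `j = 1,…,k` and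
`Σ_{j=1}^{k+1}(n^{[j]}+1) = n+1`. -/
theorem stockout_vector_block_bijection (k n : ℕ) (hk : 1 ≤ k)
    (s : Fin k → ℕ) (hs : ∀ j, 1 ≤ s j) (hn : (∑ j, s j) ≤ n) :
    Set.BijOn
      (fun r : Fin k → ℕ =>
        ((Tuple.sort r : Equiv.Perm (Fin k)),
          (fun j : Fin (k + 1) =>
            (if hj : (j : ℕ) < k then r (Tuple.sort r ⟨(j : ℕ), hj⟩) else n + 1)
              - (if hj0 : (j : ℕ) = 0 then 0
                 else r (Tuple.sort r ⟨(j : ℕ) - 1, by omega⟩))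
              - 1)))
      {r : Fin k → ℕ |
        Function.Injective r ∧
        (∀ j, 1 ≤ r j ∧ r j ≤ n) ∧
        (∀ j, (∑ i ∈ Finset.univ.filter (fun i => r i ≤ r j), s i) ≤ r j)}
      {q : Equiv.Perm (Fin k) × (Fin (k + 1) → ℕ) |
        (∀ j : Fin k,
          (∑ j' ∈ Finset.univ.filter (fun j' : Fin k => j' ≤ j), s (q.1 j'))
            ≤ ∑ j' ∈ Finset.univ.filter (fun j' : Fin (k + 1) => (j' : ℕ) ≤ (j : ℕ)),
                (q.2 j' + 1)) ∧
        (∑ j : Fin (k + 1), (q.2 j + 1)) = n + 1} := by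
  refine ⟨?_, ?_, ?_⟩
  · -- MapsTo
    rintro r ⟨hinj, hbd, hfeas⟩
    set σ := Tuple.sort r with hσ
    have hsm : StrictMono (r ∘ σ) :=
      (Tuple.monotone_sort r).strictMono_of_injective (hinj.comp σ.injective)
    set c : Fin (k + 1) → ℕ := fun j : Fin (k + 1) =>
      (if hj : (j : ℕ) < k then r (σ ⟨(j : ℕ), hj⟩) else n + 1)
        - (if hj0 : (j : ℕ) = 0 then 0
           else r (σ ⟨(j : ℕ) - 1, by omega⟩)) - 1 with hcdef
    have hc : ∀ (i : ℕ) (h : i < k + 1), c ⟨i, h⟩ =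
        (if hj : i < k then r (σ ⟨i, hj⟩) else n + 1)
          - (if hj0 : i = 0 then 0 else r (σ ⟨i - 1, by omega⟩)) - 1 :=
      fun i h => rfl
    have htel := telescope_sum k n hk r σ hsm (fun j => (hbd j).1) (fun j => (hbd j).2) c hc
    have key : ∀ j : Fin k,
        (∑ j' ∈ Finset.univ.filter (fun j' : Fin (k + 1) => (j' : ℕ) ≤ (j : ℕ)), (c j' + 1))
          = r (σ j) := by
      intro j
      rw [sum_filter_fin_le (fun j' => c j' + 1) (show (j : ℕ) < k + 1 by omega)]
      have h2 := htel (j : ℕ) (le_of_lt j.is_lt)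
      rw [dif_pos j.is_lt] at h2
      exact h2.trans (by rw [Fin.eta])
    constructor
    · intro j
      show (∑ j' ∈ Finset.univ.filter (fun j' : Fin k => j' ≤ j), s (σ j'))
        ≤ ∑ j' ∈ Finset.univ.filter (fun j' : Fin (k + 1) => (j' : ℕ) ≤ (j : ℕ)), (c j' + 1)
      rw [key j, ← sum_stock_eq s r σ hsm j]
      exact hfeas (σ j)
    · show (∑ j : Fin (k + 1), (c j + 1)) = n + 1
      have hpt : ∀ j : Fin (k + 1), c j + 1
          = (fun i : ℕ => if h : i < k + 1 then c ⟨i, h⟩ + 1 else 0) (j : ℕ) := by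
        intro j
        show c j + 1 = if h : (j : ℕ) < k + 1 then c ⟨(j : ℕ), h⟩ + 1 else 0
        rw [dif_pos j.is_lt, Fin.eta]
      rw [Finset.sum_congr rfl (fun j _ => hpt j),
        Fin.sum_univ_eq_sum_range (fun i : ℕ => if h : i < k + 1 then c ⟨i, h⟩ + 1 else 0) (k + 1)]
      have h2 := htel k le_rfl
      rw [dif_neg (lt_irrefl k)] at h2
      exact h2
  · -- InjOn
    rintro r₁ ⟨hinj₁, hbd₁, -⟩ r₂ ⟨hinj₂, hbd₂, -⟩ heq
    have hσ : Tuple.sort r₁ = Tuple.sort r₂ := congrArg Prod.fst heq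
    have hb := congrArg Prod.snd heq
    dsimp only at hb
    set σ := Tuple.sort r₁ with hσ1
    have hsm₁ : StrictMono (r₁ ∘ σ) :=
      (Tuple.monotone_sort r₁).strictMono_of_injective (hinj₁.comp σ.injective)
    have hsm₂ : StrictMono (r₂ ∘ σ) := by
      rw [hσ]
      exact (Tuple.monotone_sort r₂).strictMono_of_injective (hinj₂.comp (Tuple.sort r₂).injective)
    set c : Fin (k + 1) → ℕ := fun j : Fin (k + 1) =>
      (if hj : (j : ℕ) < k then r₁ (σ ⟨(j : ℕ), hj⟩) else n + 1)
        - (if hj0 : (j : ℕ) = 0 then 0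
           else r₁ (σ ⟨(j : ℕ) - 1, by omega⟩)) - 1 with hcdef
    have hc₁ : ∀ (i : ℕ) (h : i < k + 1), c ⟨i, h⟩ =
        (if hj : i < k then r₁ (σ ⟨i, hj⟩) else n + 1)
          - (if hj0 : i = 0 then 0 else r₁ (σ ⟨i - 1, by omega⟩)) - 1 :=
      fun i h => rfl
    have hc₂ : ∀ (i : ℕ) (h : i < k + 1), c ⟨i, h⟩ =
        (if hj : i < k then r₂ (σ ⟨i, hj⟩) else n + 1)
          - (if hj0 : i = 0 then 0 else r₂ (σ ⟨i - 1, by omega⟩)) - 1 := by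
      intro i h
      have := congrFun hb ⟨i, h⟩
      rw [hσ]
      exact this
    have htel₁ := telescope_sum k n hk r₁ σ hsm₁ (fun j => (hbd₁ j).1) (fun j => (hbd₁ j).2) c hc₁
    have htel₂ := telescope_sum k n hk r₂ σ hsm₂ (fun j => (hbd₂ j).1) (fun j => (hbd₂ j).2) c hc₂
    funext i
    have h1 := htel₁ (σ.symm i : ℕ) (le_of_lt (σ.symm i).is_lt)
    have h2 := htel₂ (σ.symm i : ℕ) (le_of_lt (σ.symm i).is_lt)
    rw [dif_pos (σ.symm i).is_lt] at h1 h2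
    have : r₁ (σ ⟨(σ.symm i : ℕ), (σ.symm i).is_lt⟩) = r₂ (σ ⟨(σ.symm i : ℕ), (σ.symm i).is_lt⟩) :=
      h1.symm.trans h2
    simpa [Fin.eta, Equiv.apply_symm_apply] using this
  · -- SurjOn
    rintro ⟨σ, b⟩ ⟨hfeas, hsum⟩
    set B : ℕ → ℕ := fun l => if h : l < k + 1 then b ⟨l, h⟩ else 0 with hB
    set P : ℕ → ℕ := fun m => ∑ l ∈ Finset.range (m + 1), (B l + 1) with hP
    have hPsucc : ∀ m, P (m + 1) = P m + (B (m + 1) + 1) := fun m =>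
      Finset.sum_range_succ _ (m + 1)
    have hPmono : StrictMono P := strictMono_nat_of_lt_succ (fun m => by rw [hPsucc]; omega)
    have hP1 : ∀ m, 1 ≤ P m := by
      intro m
      have h0 : P 0 = B 0 + 1 := by simp [hP]
      have := hPmono.monotone (Nat.zero_le m)
      omega
    have hPk : P k = n + 1 := by
      have hpt : ∀ j : Fin (k + 1), b j + 1 = (fun l => B l + 1) (j : ℕ) := by
        intro j; simp [hB, j.is_lt, j.is_le]
      rw [← hsum]
      simp_rw [hpt]
      rw [Fin.sum_univ_eq_sum_range (fun l => B l + 1) (k + 1)]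
    set r : Fin k → ℕ := fun i => P ((σ.symm i : Fin k) : ℕ) with hr
    have hrσ : ∀ (m : ℕ) (h : m < k), r (σ ⟨m, h⟩) = P m := by
      intro m h
      rw [hr]
      simp
    have hsm : StrictMono (r ∘ σ) := by
      intro a bb hab
      have ha := hrσ (a : ℕ) a.is_lt
      have hb' := hrσ (bb : ℕ) bb.is_lt
      simp only [Fin.eta] at ha hb'
      simp only [Function.comp_apply, ha, hb']
      exact hPmono (Fin.lt_def.mp hab)
    have hinj : Function.Injective r := by
      intro a bb hab
      rw [hr] at hab
      have := Fin.ext (hPmono.injective hab)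
      exact σ.symm.injective this
    have hsort : σ = Tuple.sort r := by
      rw [Tuple.eq_sort_iff]
      exact ⟨hsm.monotone, fun i j hij hf => absurd hf (hsm hij).ne⟩
    have hbd : ∀ j, 1 ≤ r j ∧ r j ≤ n := by
      intro j
      constructor
      · exact hP1 _
      · have hlt : ((σ.symm j : Fin k) : ℕ) < k := (σ.symm j).is_lt
        have h2 := hPmono hlt
        have hrj : r j = P ((σ.symm j : Fin k) : ℕ) := by rw [hr]
        omega
    have hfeasr : ∀ j, (∑ i ∈ Finset.univ.filter (fun i => r i ≤ r j), s i) ≤ r j := by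
      intro j
      have hj : j = σ (σ.symm j) := (σ.apply_symm_apply j).symm
      rw [hj, sum_stock_eq s r σ hsm (σ.symm j)]
      have h1 := hfeas (σ.symm j)
      have h2 : (∑ j' ∈ Finset.univ.filter
          (fun j' : Fin (k + 1) => (j' : ℕ) ≤ ((σ.symm j : Fin k) : ℕ)), (b j' + 1))
          = P ((σ.symm j : Fin k) : ℕ) := by
        rw [sum_filter_fin_le (fun j' => b j' + 1) (show ((σ.symm j : Fin k) : ℕ) < k + 1 by omega)]
        refine Finset.sum_congr rfl (fun i hi => ?_)
        rw [Finset.mem_range] at hi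
        have hik : i < k + 1 := by omega
        simp [hB, hik, Nat.lt_succ_iff.mp hik]
      rw [h2] at h1
      calc (∑ j' ∈ Finset.univ.filter (fun j' : Fin k => j' ≤ σ.symm j), s (σ j')) ≤ _ := h1
        _ = r (σ (σ.symm j)) := by simp [hr]
    refine ⟨r, ⟨hinj, hbd, hfeasr⟩, ?_⟩
    have hsort' : Tuple.sort r = σ := hsort.symm
    refine Prod.ext ?_ ?_
    · exact hsort'
    · funext j
      show (if hj : (j : ℕ) < k then r (Tuple.sort r ⟨(j : ℕ), hj⟩) else n + 1)
          - (if hj0 : (j : ℕ) = 0 then 0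
             else r (Tuple.sort r ⟨(j : ℕ) - 1, by omega⟩)) - 1 = b j
      simp only [hsort']
      have hbj : b j = B (j : ℕ) := by simp [hB, j.is_lt, j.is_le]
      by_cases hj0 : (j : ℕ) = 0
      · rw [dif_pos (show (j : ℕ) < k by omega), dif_pos hj0, hrσ]
        have h0 : P 0 = B 0 + 1 := by simp [hP]
        rw [hbj, hj0]
        omega
      · rw [dif_neg hj0]
        have hprev : r (σ ⟨(j : ℕ) - 1, by omega⟩) = P ((j : ℕ) - 1) := hrσ _ _
        rw [hprev]
        have hPstep : P ((j : ℕ) - 1 + 1) = P ((j : ℕ) - 1) + (B ((j : ℕ) - 1 + 1) + 1) :=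
          hPsucc _
        rw [show (j : ℕ) - 1 + 1 = (j : ℕ) by omega] at hPstep
        by_cases hjk : (j : ℕ) < k
        · rw [dif_pos hjk, hrσ, hbj]
          omega
        · rw [dif_neg hjk]
          have hjek : (j : ℕ) = k := by omega
          rw [hjek] at hPstep hbj ⊢
          rw [hbj]
          omega
end
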